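/- Let G be a finite simple graph, k a positive integer, and f a proper k-coloring of G. Let u and v be distinct vertices of G with N_G(u) = N_G(v) and f(u) = f(v) (such vertices are called frozen with respect to f). Then every proper k-coloring f′ that is reconfigurable from f under color swapping satisfies f′(u) = f(u) and f′(v) = f(v); that is, no color swap in any reconfiguration sequence starting from f involves u or v. -/

import Mathlib

/-- A proper `k`-coloring of `G`: a map `f : V → {1,…,k}` assigning different
colors to adjacent vertices. -/
def IsProperColoring {V : Type*} (G : SimpleGraph V) (k : ℕ) (f : V → ℕ) : Prop :=
  (∀ v, f v ∈ Finset.Icc 1 k) ∧ ∀ ⦃u w : V⦄, G.Adj u w → f u ≠ f w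

/-- Two colorings are adjacent under color swapping: there is an edge `uw` whose
endpoint colors are exchanged, all other vertices keep their color, and the two
colorings are distinct. -/
def CSAdj {V : Type*} (G : SimpleGraph V) (f f' : V → ℕ) : Prop :=
  f ≠ f' ∧ ∃ u w : V, G.Adj u w ∧ f u = f' w ∧ f w = f' u ∧
    ∀ x : V, x ≠ u → x ≠ w → f x = f' x

/-- One step of the color-swapping reconfiguration between proper `k`-colorings. -/
def CSStep {V : Type*} (G : SimpleGraph V) (k : ℕ) (f f' : V → ℕ) : Prop :=
  IsProperColoring G k f ∧ IsProperColoring G k f' ∧ CSAdj G f f'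

/-- Two proper `k`-colorings are reconfigurable under color swapping. -/
def CSReconf {V : Type*} (G : SimpleGraph V) (k : ℕ) : (V → ℕ) → (V → ℕ) → Prop :=
  Relation.ReflTransGen (CSStep G k)

/-- Helper: a swap edge cannot touch a frozen vertex. -/
lemma frozen_not_endpoint {V : Type*} (G : SimpleGraph V) (k : ℕ)
    (g g' : V → ℕ) (hg' : IsProperColoring G k g') (u v a b : V)
    (huv : u ≠ v) (hN : G.neighborSet u = G.neighborSet v) (hguv : g u = g v)
    (hab : G.Adj a b) (h1 : g a = g' b) (h2 : g b = g' a)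
    (h3 : ∀ x : V, x ≠ a → x ≠ b → g x = g' x) : u ≠ a ∧ u ≠ b := by
  have hadj_uv : ¬ G.Adj u v := by
    intro h
    have : v ∈ G.neighborSet u := h
    rw [hN] at this
    exact G.loopless.irrefl v this
  constructor
  · rintro rfl
    -- a = u; b ∈ N(u) = N(v)
    have hvb : v ≠ b := by rintro rfl; exact hadj_uv hab
    have hAdjvb : G.Adj v b := by
      have : b ∈ G.neighborSet u := hab
      rw [hN] at this; exact this
    have hgv : g v = g' v := h3 v (Ne.symm huv) hvb
    have : g' v = g' b := by rw [← hgv, ← hguv, h1]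
    exact hg'.2 hAdjvb this
  · rintro rfl
    -- b = u; a ∈ N(u) = N(v)
    have hva : v ≠ a := by rintro rfl; exact hadj_uv hab.symm
    have hAdjva : G.Adj v a := by
      have : a ∈ G.neighborSet u := hab.symm
      rw [hN] at this; exact this
    have hgv : g v = g' v := h3 v hva (Ne.symm huv)
    have : g' v = g' a := by rw [← hgv, ← hguv, h2]
    exact hg'.2 hAdjva this

/-- frozen vertices. If `u ≠ v` have the same open neighborhood
and the same color under a proper `k`-coloring `f`, then their colors never
change in any coloring reconfigurable from `f` under color swapping. -/
theorem stmt_17 {V : Type*} [Fintype V] (G : SimpleGraph V) (k : ℕ) (hk : 1 ≤ k)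
    (f : V → ℕ) (hf : IsProperColoring G k f)
    (u v : V) (huv : u ≠ v) (hN : G.neighborSet u = G.neighborSet v)
    (hcol : f u = f v) :
    ∀ f' : V → ℕ, CSReconf G k f f' → f' u = f u ∧ f' v = f v := by
  intro f' h
  induction h with
  | refl => exact ⟨rfl, rfl⟩
  | @tail g g' hsteps hstep ih =>
    obtain ⟨hu, hv⟩ := ih
    obtain ⟨hg, hg', _, a, b, hab, h1, h2, h3⟩ := hstep
    have hguv : g u = g v := by rw [hu, hv, hcol]
    have hU := frozen_not_endpoint G k g g' hg' u v a b huv hN hguv hab h1 h2 h3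
    have hV := frozen_not_endpoint G k g g' hg' v u a b (Ne.symm huv) hN.symm
      hguv.symm hab h1 h2 h3
    exact ⟨by rw [← h3 u hU.1 hU.2, hu], by rw [← h3 v hV.1 hV.2, hv]⟩
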